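/- With the isometry setup below, let u_1, …, u_ℓ ∈ ℂⁿ be orthonormal vectors, v_1, …, v_ℓ ∈ ℂⁿ unit vectors, and θ_1, …, θ_ℓ ∈ (0, π/2) such that AᴴB v_k = cos(θ_k) u_k and BᴴA u_k = cos(θ_k) v_k for each k. Let ν_1, …, ν_ℓ be real numbers with Σ_k ν_k² = 1 and set z = Σ_k ν_k A u_k. Then for every natural number T with T ≥ 64 Σ_k ν_k²/θ_k one has B(z, T) := (1/(T+1)) Σ_{t=0}^{T} Re⟨z, Wᵗ z⟩ ≤ 1/2. -/

import Mathlib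

open Matrix

lemma rec1 (x y : ℝ) : -Real.sin (x + y) = Real.sin (x - y) - 2 * Real.cos y * Real.sin x := by
  rw [Real.sin_add, Real.sin_sub]; ring

lemma rec2 (x y : ℝ) : Real.sin (x + 2*y)
    = 2 * Real.cos y * (-Real.sin (x - y)) + (4 * Real.cos y ^ 2 - 1) * Real.sin x := by
  rw [show x + 2*y = x+y+y by ring]
  simp only [Real.sin_add, Real.cos_add, Real.sin_sub]
  linear_combination (-Real.sin x) * Real.sin_sq_add_cos_sq y

lemma cd_cos (x y : ℝ) (hs : Real.sin y ≠ 0) :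
    -Real.sin (x - y) / Real.sin y + Real.sin x / Real.sin y * Real.cos y = Real.cos x := by
  field_simp
  rw [Real.sin_sub]; ring

lemma sum_dotProduct' {ι m : Type*} [Fintype ι] [Fintype m] (f : ι → m → ℂ) (w : m → ℂ) :
    (∑ k, f k) ⬝ᵥ w = ∑ k, f k ⬝ᵥ w := by
  simp only [dotProduct, Finset.sum_apply, Finset.sum_mul]
  exact Finset.sum_comm

lemma dotProduct_sum' {ι m : Type*} [Fintype ι] [Fintype m] (f : ι → m → ℂ) (w : m → ℂ) :
    w ⬝ᵥ (∑ k, f k) = ∑ k, w ⬝ᵥ f k := by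
  simp only [dotProduct, Finset.sum_apply, Finset.mul_sum]
  exact Finset.sum_comm

lemma dirichlet_key (θ : ℝ) (M : ℕ) :
    (∑ t ∈ Finset.range (M+1), Real.cos (2*t*θ)) * (2 * Real.sin θ)
      = Real.sin ((2*M+1)*θ) + Real.sin θ := by
  induction M with
  | zero => norm_num; ring
  | succ m ih =>
    rw [Finset.sum_range_succ, add_mul, ih]
    push_cast
    rw [show (2*((m:ℝ)+1)+1)*θ = (2*((m:ℝ)+1))*θ + θ by ring,
      show (2*(m:ℝ)+1)*θ = (2*((m:ℝ)+1))*θ - θ by ring,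
      Real.sin_add, Real.sin_sub]
    ring

lemma dirichlet_sum_le (θ : ℝ) (h1 : 0 < θ) (h2 : θ < Real.pi/2) (T : ℕ) :
    ∑ t ∈ Finset.range (T+1), Real.cos (2*t*θ) ≤ 2/θ := by
  have hpi := Real.pi_pos
  have hs : 0 < Real.sin θ := Real.sin_pos_of_pos_of_lt_pi h1 (by linarith)
  have hhalf : θ/2 ≤ Real.sin θ := by
    have h4 : (1:ℝ)/2 ≤ 2/Real.pi := by
      rw [div_le_div_iff₀ (by norm_num) hpi]; linarith [Real.pi_le_four]
    calc θ/2 = (1/2)*θ := by ring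
      _ ≤ 2/Real.pi*θ := by nlinarith
      _ ≤ Real.sin θ := Real.mul_le_sin h1.le h2.le
  have hkey := dirichlet_key θ T
  have hb := Real.sin_le_one ((2*(T:ℝ)+1)*θ)
  rcases le_or_gt (∑ t ∈ Finset.range (T+1), Real.cos (2*t*θ)) 0 with h | h
  · have : 0 < 2/θ := by positivity
    linarith
  · rw [le_div_iff₀ h1]
    nlinarith [mul_le_mul_of_nonneg_left (by linarith : θ ≤ 2*Real.sin θ) h.le,
      Real.sin_le_one θ]

/-- Szegedy's orbit lemma. With isometries A, B, orthonormal left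
singular vectors u_k, unit right singular vectors v_k with singular values
cos θ_k, θ_k ∈ (0, π/2), coefficients ν_k with Σ ν_k² = 1 and
z = Σ ν_k A u_k, for every T ≥ 64 Σ ν_k²/θ_k one has
B(z,T) = (1/(T+1)) Σ_{t=0}^{T} Re⟨z, Wᵗ z⟩ ≤ 1/2. -/
theorem stmt3 (n N ℓ : ℕ) (hn : 0 < n) (hN : 0 < N)
    (A B : Matrix (Fin N) (Fin n) ℂ)
    (hA : Aᴴ * A = 1) (hB : Bᴴ * B = 1)
    (u v : Fin ℓ → Fin n → ℂ)
    (hu : ∀ j k, star (u j) ⬝ᵥ u k = if j = k then 1 else 0)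
    (hv : ∀ k, star (v k) ⬝ᵥ v k = 1)
    (θ : Fin ℓ → ℝ) (hθ : ∀ k, θ k ∈ Set.Ioo 0 (Real.pi / 2))
    (hABv : ∀ k, (Aᴴ * B) *ᵥ v k = (Real.cos (θ k) : ℂ) • u k)
    (hBAu : ∀ k, (Bᴴ * A) *ᵥ u k = (Real.cos (θ k) : ℂ) • v k)
    (ν : Fin ℓ → ℝ) (hν : ∑ k, ν k ^ 2 = 1)
    (z : Fin N → ℂ) (hz : z = ∑ k, (ν k : ℂ) • (A *ᵥ u k))
    (W : Matrix (Fin N) (Fin N) ℂ)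
    (hW : W = ((2 : ℂ) • (B * Bᴴ) - 1) * ((2 : ℂ) • (A * Aᴴ) - 1))
    (T : ℕ) (hT : (T : ℝ) ≥ 64 * ∑ k, ν k ^ 2 / θ k) :
    (1 / ((T : ℝ) + 1)) * ∑ t ∈ Finset.range (T + 1),
      (star z ⬝ᵥ ((W ^ t) *ᵥ z)).re ≤ 1 / 2 := by
  have hpi := Real.pi_pos
  have hsk : ∀ k, Real.sin (θ k) ≠ 0 := fun k =>
    ne_of_gt (Real.sin_pos_of_pos_of_lt_pi (hθ k).1 (by linarith [(hθ k).2]))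
  have hdot : ∀ (M M' : Matrix (Fin N) (Fin n) ℂ) (x y : Fin n → ℂ),
      star (M *ᵥ x) ⬝ᵥ (M' *ᵥ y) = star x ⬝ᵥ ((Mᴴ * M') *ᵥ y) := by
    intro M M' x y
    rw [star_mulVec, dotProduct_mulVec, vecMul_vecMul, ← dotProduct_mulVec]
  have haa : ∀ j k, star (A *ᵥ u j) ⬝ᵥ (A *ᵥ u k) = if j = k then 1 else 0 := by
    intro j k; rw [hdot, hA, one_mulVec, hu]
  have hab : ∀ j k, star (A *ᵥ u j) ⬝ᵥ (B *ᵥ v k)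
      = if j = k then (Real.cos (θ k) : ℂ) else 0 := by
    intro j k
    rw [hdot, hABv k, dotProduct_smul, hu]
    split_ifs <;> simp
  have hRAa : ∀ k, (((2:ℂ) • (A * Aᴴ) - 1)) *ᵥ (A *ᵥ u k) = A *ᵥ u k := by
    intro k
    rw [sub_mulVec, one_mulVec, smul_mulVec, mulVec_mulVec, Matrix.mul_assoc,
      ← mulVec_mulVec, hA, one_mulVec]
    module
  have hRAb : ∀ k, (((2:ℂ) • (A * Aᴴ) - 1)) *ᵥ (B *ᵥ v k)
      = ((2*Real.cos (θ k) : ℝ) : ℂ) • (A *ᵥ u k) - B *ᵥ v k := by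
    intro k
    rw [sub_mulVec, one_mulVec, smul_mulVec, ← mulVec_mulVec,
      mulVec_mulVec (v k) Aᴴ B, hABv k, mulVec_smul]
    push_cast
    module
  have hRBa : ∀ k, (((2:ℂ) • (B * Bᴴ) - 1)) *ᵥ (A *ᵥ u k)
      = ((2*Real.cos (θ k) : ℝ) : ℂ) • (B *ᵥ v k) - A *ᵥ u k := by
    intro k
    rw [sub_mulVec, one_mulVec, smul_mulVec, ← mulVec_mulVec,
      mulVec_mulVec (u k) Bᴴ A, hBAu k, mulVec_smul]
    push_cast
    module
  have hRBb : ∀ k, (((2:ℂ) • (B * Bᴴ) - 1)) *ᵥ (B *ᵥ v k) = B *ᵥ v k := by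
    intro k
    rw [sub_mulVec, one_mulVec, smul_mulVec, mulVec_mulVec, Matrix.mul_assoc,
      ← mulVec_mulVec, hB, one_mulVec]
    module
  have hWa : ∀ k, W *ᵥ (A *ᵥ u k)
      = ((2*Real.cos (θ k) : ℝ) : ℂ) • (B *ᵥ v k) - A *ᵥ u k := by
    intro k
    rw [hW, ← mulVec_mulVec, hRAa, hRBa]
  have hWb : ∀ k, W *ᵥ (B *ᵥ v k)
      = ((4*Real.cos (θ k)^2 - 1 : ℝ) : ℂ) • (B *ᵥ v k)
        - ((2*Real.cos (θ k) : ℝ) : ℂ) • (A *ᵥ u k) := by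
    intro k
    rw [hW, ← mulVec_mulVec, hRAb, mulVec_sub, mulVec_smul, hRBa, hRBb]
    push_cast
    module
  -- powers of W on A *ᵥ u k
  have hpow : ∀ (t : ℕ) (k : Fin ℓ), (W ^ t) *ᵥ (A *ᵥ u k) =
      ((-Real.sin ((2*(t:ℝ)-1)*θ k) / Real.sin (θ k) : ℝ) : ℂ) • (A *ᵥ u k)
      + ((Real.sin (2*(t:ℝ)*θ k) / Real.sin (θ k) : ℝ) : ℂ) • (B *ᵥ v k) := by
    intro t k
    induction t with
    | zero =>
      have e1 : -Real.sin ((2*((0:ℕ):ℝ)-1)*θ k) / Real.sin (θ k) = 1 := by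
        rw [show (2*((0:ℕ):ℝ)-1)*θ k = -(θ k) by push_cast; ring, Real.sin_neg, neg_neg,
          div_self (hsk k)]
      have e2 : Real.sin (2*((0:ℕ):ℝ)*θ k) / Real.sin (θ k) = 0 := by
        rw [show 2*((0:ℕ):ℝ)*θ k = 0 by push_cast; ring, Real.sin_zero, zero_div]
      rw [e1, e2, pow_zero, one_mulVec]
      push_cast
      module
    | succ t ih =>
      have e1 : -Real.sin ((2*((t+1:ℕ):ℝ)-1)*θ k) / Real.sin (θ k)
          = -(-Real.sin ((2*((t:ℕ):ℝ)-1)*θ k) / Real.sin (θ k))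
            - (2*Real.cos (θ k)) * (Real.sin (2*((t:ℕ):ℝ)*θ k) / Real.sin (θ k)) := by
        rw [show (2*((t+1:ℕ):ℝ)-1)*θ k = 2*((t:ℕ):ℝ)*θ k + θ k by push_cast; ring,
          show (2*((t:ℕ):ℝ)-1)*θ k = 2*((t:ℕ):ℝ)*θ k - θ k by ring]
        linear_combination rec1 (2*((t:ℕ):ℝ)*θ k) (θ k) / Real.sin (θ k)
      have e2 : Real.sin (2*((t+1:ℕ):ℝ)*θ k) / Real.sin (θ k)
          = (2*Real.cos (θ k)) * (-Real.sin ((2*((t:ℕ):ℝ)-1)*θ k) / Real.sin (θ k))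
            + (4*Real.cos (θ k)^2 - 1) * (Real.sin (2*((t:ℕ):ℝ)*θ k) / Real.sin (θ k)) := by
        rw [show (2*((t+1:ℕ):ℝ))*θ k = 2*((t:ℕ):ℝ)*θ k + 2*θ k by push_cast; ring,
          show (2*((t:ℕ):ℝ)-1)*θ k = 2*((t:ℕ):ℝ)*θ k - θ k by ring]
        linear_combination rec2 (2*((t:ℕ):ℝ)*θ k) (θ k) / Real.sin (θ k)
      rw [pow_succ', ← mulVec_mulVec, ih, mulVec_add, mulVec_smul, mulVec_smul,
        hWa k, hWb k, e1, e2]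
      push_cast
      module
  -- the inner product at time t
  have hmvsum : ∀ (M : Matrix (Fin N) (Fin N) ℂ) (f : Fin ℓ → Fin N → ℂ),
      M *ᵥ (∑ k, f k) = ∑ k, M *ᵥ f k := by
    intro M f
    simp only [← Matrix.mulVecLin_apply, map_sum]
  have hip : ∀ t : ℕ, star z ⬝ᵥ ((W ^ t) *ᵥ z)
      = ∑ k, ((ν k : ℂ))^2 * (((-Real.sin ((2*(t:ℝ)-1)*θ k) / Real.sin (θ k) : ℝ) : ℂ)
          + ((Real.sin (2*(t:ℝ)*θ k) / Real.sin (θ k) : ℝ) : ℂ) * (Real.cos (θ k) : ℂ)) := by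
    intro t
    rw [hz, hmvsum]
    simp only [mulVec_smul, hpow, star_sum, star_smul, Complex.star_def, Complex.conj_ofReal,
      smul_add, sum_dotProduct', dotProduct_sum', smul_dotProduct,
      dotProduct_add, dotProduct_smul, haa, hab, smul_eq_mul, mul_ite,
      mul_one, mul_zero, Finset.sum_ite_eq, Finset.sum_ite_eq', Finset.mem_univ, if_true]
    exact Finset.sum_congr rfl fun k _ => by push_cast; ring
  have hre : ∀ t : ℕ, (star z ⬝ᵥ ((W ^ t) *ᵥ z)).re
      = ∑ k, ν k ^ 2 * Real.cos (2*(t:ℝ)*θ k) := by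
    intro t
    rw [hip t, Complex.re_sum]
    apply Finset.sum_congr rfl
    intro k _
    have : ((ν k : ℂ))^2 * (((-Real.sin ((2*(t:ℝ)-1)*θ k) / Real.sin (θ k) : ℝ) : ℂ)
        + ((Real.sin (2*(t:ℝ)*θ k) / Real.sin (θ k) : ℝ) : ℂ) * (Real.cos (θ k) : ℂ))
        = ((ν k ^ 2 * (-Real.sin ((2*(t:ℝ)-1)*θ k) / Real.sin (θ k)
            + Real.sin (2*(t:ℝ)*θ k) / Real.sin (θ k) * Real.cos (θ k)) : ℝ) : ℂ) := by
      push_cast; ring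
    rw [this, Complex.ofReal_re]
    congr 1
    rw [show (2*(t:ℝ)-1)*θ k = 2*(t:ℝ)*θ k - θ k by ring]
    exact cd_cos (2*(t:ℝ)*θ k) (θ k) (hsk k)
  -- summation and bound
  have hsum : ∑ t ∈ Finset.range (T + 1), (star z ⬝ᵥ ((W ^ t) *ᵥ z)).re
      ≤ 2 * ∑ k, ν k ^ 2 / θ k := by
    calc ∑ t ∈ Finset.range (T + 1), (star z ⬝ᵥ ((W ^ t) *ᵥ z)).re
        = ∑ t ∈ Finset.range (T + 1), ∑ k, ν k ^ 2 * Real.cos (2*(t:ℝ)*θ k) := by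
          exact Finset.sum_congr rfl fun t _ => hre t
      _ = ∑ k, ν k ^ 2 * ∑ t ∈ Finset.range (T + 1), Real.cos (2*(t:ℝ)*θ k) := by
          rw [Finset.sum_comm]
          exact Finset.sum_congr rfl fun k _ => (Finset.mul_sum _ _ _).symm
      _ ≤ ∑ k, ν k ^ 2 * (2 / θ k) := by
          apply Finset.sum_le_sum
          intro k _
          exact mul_le_mul_of_nonneg_left
            (dirichlet_sum_le (θ k) (hθ k).1 (hθ k).2 T) (sq_nonneg _)
      _ = 2 * ∑ k, ν k ^ 2 / θ k := by
          rw [Finset.mul_sum]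
          exact Finset.sum_congr rfl fun k _ => by ring
  have hS0 : 0 ≤ ∑ k, ν k ^ 2 / θ k :=
    Finset.sum_nonneg fun k _ => div_nonneg (sq_nonneg _) (hθ k).1.le
  have hT1 : (0:ℝ) < (T:ℝ) + 1 := by positivity
  calc (1 / ((T : ℝ) + 1)) * ∑ t ∈ Finset.range (T + 1), (star z ⬝ᵥ ((W ^ t) *ᵥ z)).re
      ≤ (1 / ((T : ℝ) + 1)) * (2 * ∑ k, ν k ^ 2 / θ k) :=
        mul_le_mul_of_nonneg_left hsum (by positivity)
    _ ≤ 1 / 2 := by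
        rw [one_div, inv_mul_le_iff₀ hT1]
        nlinarith
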